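/- arXiv:0803.2839 — 4 statements merged into one kernel-verified Lean document; each statement's English description precedes it below -/
import Mathlib

section
/- Let s > 0 and let f, {f_λ : λ ∈ Λ} be as below. For any β ≥ s²/n + 2 sup_{λ∈Λ} ‖f − f_λ‖_n² and every μ' ∈ 𝒫'_Λ, the function μ ↦ exp( s² ‖f̄_{μ'} − f̄_μ‖_n² / (n β²) − ‖f − f̄_μ‖_n² / β ) is concave on the convex set 𝒫'_Λ, i.e. for all μ, μ̃ ∈ 𝒫'_Λ, G((μ + μ̃)/2) ≥ (G(μ) + G(μ̃))/2 where G denotes this function. -/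
open MeasureTheory ProbabilityTheory
open scoped ENNReal NNReal

noncomputable section

/-- Empirical squared norm `‖v‖ₙ² = n⁻¹ ∑ᵢ vᵢ²`. -/
def normSqV (n : ℕ) (v : Fin n → ℝ) : ℝ := (∑ i, v i ^ 2) / n

/-- Exponential weight `θ_λ(Y)`. -/
def expWeight {X Λ : Type*} [MeasurableSpace Λ] (n : ℕ) (x : Fin n → X)
    (F : Λ → X → ℝ) (π : Measure Λ) (β : ℝ) (Y : Fin n → ℝ) (l : Λ) : ℝ :=
  Real.exp (-(n : ℝ) * normSqV n (fun i => Y i - F l (x i)) / β) /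
    ∫ w, Real.exp (-(n : ℝ) * normSqV n (fun i => Y i - F w (x i)) / β) ∂π

/-- Exponentially weighted aggregate `f̂ₙ` evaluated at a point. -/
def aggregate {X Λ : Type*} [MeasurableSpace Λ] (n : ℕ) (x : Fin n → X)
    (F : Λ → X → ℝ) (π : Measure Λ) (β : ℝ) (Y : Fin n → ℝ) (pt : X) : ℝ :=
  ∫ l, expWeight n x F π β Y l * F l pt ∂π

open Classical in
/-- Kullback–Leibler divergence `𝒦(p,π)`, equal to `⊤` when undefined. -/
def klDiv {α : Type*} [MeasurableSpace α] (p q : Measure α) : EReal :=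
  if p ≪ q ∧ Integrable (fun a => Real.log (p.rnDeriv q a).toReal) p
  then ((∫ a, Real.log (p.rnDeriv q a).toReal ∂p : ℝ) : EReal)
  else ⊤

/-- The set `𝒫'_Λ` of probability measures `μ` on `Λ` making `λ ↦ f_λ(xᵢ)`
`μ`-integrable for every design point. -/
def PPrime {X Λ : Type*} [MeasurableSpace Λ] (n : ℕ) (x : Fin n → X)
    (F : Λ → X → ℝ) : Set (Measure Λ) :=
  {μ | IsProbabilityMeasure μ ∧ ∀ i : Fin n, Integrable (fun l => F l (x i)) μ}

/-- `f̄_μ(xᵢ) = ∫ f_λ(xᵢ) μ(dλ)`. -/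
def barF {X Λ : Type*} [MeasurableSpace Λ] (n : ℕ) (x : Fin n → X)
    (F : Λ → X → ℝ) (μ : Measure Λ) (i : Fin n) : ℝ :=
  ∫ l, F l (x i) ∂μ

/-- The functional `G(μ) = exp(s²‖f̄_{μ'} − f̄_μ‖ₙ²/(nβ²) − ‖f − f̄_μ‖ₙ²/β)`. -/
def Gfun {X Λ : Type*} [MeasurableSpace Λ] (n : ℕ) (x : Fin n → X) (f : X → ℝ)
    (F : Λ → X → ℝ) (s β : ℝ) (μ' μ : Measure Λ) : ℝ :=
  Real.exp (s ^ 2 * (normSqV n fun i => barF n x F μ' i - barF n x F μ i) / (n * β ^ 2)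
    - (normSqV n fun i => f (x i) - barF n x F μ i) / β)

set_option maxHeartbeats 1000000 in
lemma exp_midpoint_core (n : ℕ) (hn : 0 < n) (y b' v w : Fin n → ℝ)
    (β c M : ℝ) (hβ : 0 < β) (hc0 : 0 ≤ c) (hc1 : c ≤ 1)
    (h1 : normSqV n (fun i => y i - b' i) ≤ M)
    (h2 : normSqV n (fun i => y i - v i) ≤ M)
    (h3 : normSqV n (fun i => y i - w i) ≤ M)
    (hkey : 2 * M ≤ β * (1 - c)) :
    (Real.exp ((c * normSqV n (fun i => b' i - v i)
        - normSqV n (fun i => y i - v i)) / β)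
      + Real.exp ((c * normSqV n (fun i => b' i - w i)
        - normSqV n (fun i => y i - w i)) / β)) / 2
    ≤ Real.exp ((c * normSqV n (fun i => b' i - (v i + w i) / 2)
        - normSqV n (fun i => y i - (v i + w i) / 2)) / β) := by
  have hn' : (0:ℝ) < n := by exact_mod_cast hn
  simp only [normSqV] at h1 h2 h3 ⊢
  set A1 := ∑ i, (b' i - v i) ^ 2 with hA1
  set A2 := ∑ i, (b' i - w i) ^ 2 with hA2
  set B1 := ∑ i, (y i - v i) ^ 2 with hB1
  set B2 := ∑ i, (y i - w i) ^ 2 with hB2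
  set Ay := ∑ i, (y i - b' i) ^ 2 with hAy
  set U := ∑ i, (w i - v i) ^ 2 with hU
  set Zu := ∑ i, ((c * (b' i - (v i + w i) / 2) - (y i - (v i + w i) / 2)) * (w i - v i)) with hZu
  set Z := ∑ i, (c * (b' i - (v i + w i) / 2) - (y i - (v i + w i) / 2)) ^ 2 with hZ
  have hU0 : 0 ≤ U := Finset.sum_nonneg fun i _ => sq_nonneg _
  have hZ0 : 0 ≤ Z := Finset.sum_nonneg fun i _ => sq_nonneg _
  have hB10 : 0 ≤ B1 := Finset.sum_nonneg fun i _ => sq_nonneg _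
  have hM0 : 0 ≤ M := le_trans (by positivity) h2
  -- parallelogram-type identities
  have F1 : ∑ i, (b' i - (v i + w i) / 2) ^ 2 = (A1 + A2) / 2 - U / 4 := by
    rw [hA1, hA2, hU, ← Finset.sum_add_distrib, Finset.sum_div, Finset.sum_div,
      ← Finset.sum_sub_distrib]
    exact Finset.sum_congr rfl fun i _ => by ring
  have F2 : ∑ i, (y i - (v i + w i) / 2) ^ 2 = (B1 + B2) / 2 - U / 4 := by
    rw [hB1, hB2, hU, ← Finset.sum_add_distrib, Finset.sum_div, Finset.sum_div,
      ← Finset.sum_sub_distrib]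
    exact Finset.sum_congr rfl fun i _ => by ring
  have F3 : c * A1 - c * A2 - (B1 - B2) = 2 * Zu := by
    rw [hA1, hA2, hB1, hB2, hZu, Finset.mul_sum, Finset.mul_sum, Finset.mul_sum,
      ← Finset.sum_sub_distrib, ← Finset.sum_sub_distrib, ← Finset.sum_sub_distrib]
    exact Finset.sum_congr rfl fun i _ => by ring
  have F4 : Zu ^ 2 ≤ Z * U := by
    rw [hZu, hZ, hU]
    exact Finset.sum_mul_sq_le_sq_mul_sq _ _ _
  have F5 : Z ≤ c * Ay + (1 - c) * (B1 + B2) / 2 := by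
    have : c * Ay + (1 - c) * (B1 + B2) / 2
        = ∑ i, (c * (y i - b' i) ^ 2 + (1 - c) * ((y i - v i) ^ 2 + (y i - w i) ^ 2) / 2) := by
      rw [hAy, hB1, hB2, ← Finset.sum_add_distrib, Finset.mul_sum, Finset.mul_sum,
        Finset.sum_div, ← Finset.sum_add_distrib]
    rw [hZ, this]
    refine Finset.sum_le_sum fun i _ => ?_
    have key : c * (y i - b' i) ^ 2 + (1 - c) * ((y i - v i) ^ 2 + (y i - w i) ^ 2) / 2
        - (c * (b' i - (v i + w i) / 2) - (y i - (v i + w i) / 2)) ^ 2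
        = c * (1 - c) * ((b' i - y i) - ((v i + w i) / 2 - y i)) ^ 2
          + (1 - c) * ((v i - w i) / 2) ^ 2 := by ring
    have t1 : 0 ≤ c * (1 - c) * ((b' i - y i) - ((v i + w i) / 2 - y i)) ^ 2 :=
      mul_nonneg (mul_nonneg hc0 (by linarith)) (sq_nonneg _)
    have t2 : 0 ≤ (1 - c) * ((v i - w i) / 2) ^ 2 :=
      mul_nonneg (by linarith) (sq_nonneg _)
    linarith
  have hZnM : Z ≤ n * M := by
    have h2' : B1 ≤ n * M := by rw [div_le_iff₀ hn'] at h2; linarith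
    have h3' : B2 ≤ n * M := by rw [div_le_iff₀ hn'] at h3; linarith
    have h1' : Ay ≤ n * M := by rw [div_le_iff₀ hn'] at h1; linarith
    have t1 : c * Ay ≤ c * (n * M) := mul_le_mul_of_nonneg_left h1' hc0
    have t2 : (1 - c) * (B1 + B2) ≤ (1 - c) * (n * M + n * M) :=
      mul_le_mul_of_nonneg_left (by linarith) (by linarith)
    have t3 : c * (n * M) + (1 - c) * (n * M + n * M) / 2 = n * M := by ring
    linarith
  -- abbreviations for the three exponents
  set p := (c * (A1 / n) - B1 / n) / β with hp
  set q := (c * (A2 / n) - B2 / n) / β with hq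
  set d := (1 - c) * U / (4 * n * β) with hd
  have hd0 : 0 ≤ d := by
    rw [hd]
    exact div_nonneg (mul_nonneg (by linarith) hU0) (by positivity)
  have hmid : (c * ((∑ i, (b' i - (v i + w i) / 2) ^ 2) / n)
      - (∑ i, (y i - (v i + w i) / 2) ^ 2) / n) / β = (p + q) / 2 + d := by
    rw [F1, F2, hp, hq, hd]
    field_simp
    ring
  have hdiff : p - q = 2 * Zu / (n * β) := by
    rw [hp, hq, ← F3]
    field_simp
    ring
  have hD : (p - q) ^ 2 ≤ 8 * d := by
    have e1 : (p - q) ^ 2 = 4 * Zu ^ 2 / (n ^ 2 * β ^ 2) := by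
      rw [hdiff]; field_simp; ring
    have e2 : 4 * Zu ^ 2 / (n ^ 2 * β ^ 2) ≤ 4 * ((n * M) * U) / (n ^ 2 * β ^ 2) := by
      gcongr
      exact F4.trans (by nlinarith)
    have e3 : 4 * ((n * M) * U) / (n ^ 2 * β ^ 2) ≤ 4 * ((n * (β * (1 - c) / 2)) * U) / (n ^ 2 * β ^ 2) := by
      gcongr
      linarith
    have e4 : 4 * ((n * (β * (1 - c) / 2)) * U) / (n ^ 2 * β ^ 2) = 8 * d := by
      rw [hd]; field_simp; ring
    calc (p - q) ^ 2 = 4 * Zu ^ 2 / (n ^ 2 * β ^ 2) := e1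
      _ ≤ 4 * ((n * M) * U) / (n ^ 2 * β ^ 2) := e2
      _ ≤ 4 * ((n * (β * (1 - c) / 2)) * U) / (n ^ 2 * β ^ 2) := e3
      _ = 8 * d := e4
  rw [hmid]
  rw [div_le_iff₀ (by norm_num : (0:ℝ) < 2)]
  have e1 : Real.exp p + Real.exp q
      = 2 * Real.exp ((p + q) / 2) * Real.cosh ((p - q) / 2) := by
    rw [Real.cosh_eq]
    have : 2 * Real.exp ((p + q) / 2) * ((Real.exp ((p - q) / 2) + Real.exp (-((p - q) / 2))) / 2)
        = Real.exp ((p + q) / 2 + (p - q) / 2) + Real.exp ((p + q) / 2 + -((p - q) / 2)) := by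
      rw [Real.exp_add, Real.exp_add]; ring
    rw [this, show (p + q) / 2 + (p - q) / 2 = p by ring,
      show (p + q) / 2 + -((p - q) / 2) = q by ring]
  have hdle : ((p - q) / 2) ^ 2 / 2 ≤ d := by nlinarith
  calc Real.exp p + Real.exp q
      = 2 * Real.exp ((p + q) / 2) * Real.cosh ((p - q) / 2) := e1
    _ ≤ 2 * Real.exp ((p + q) / 2) * Real.exp (((p - q) / 2) ^ 2 / 2) := by
        have := Real.cosh_le_exp_half_sq ((p - q) / 2)
        have hpos : (0:ℝ) < 2 * Real.exp ((p + q) / 2) := by positivity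
        nlinarith
    _ ≤ 2 * Real.exp ((p + q) / 2) * Real.exp d := by
        have := Real.exp_le_exp.2 hdle
        have hpos : (0:ℝ) < 2 * Real.exp ((p + q) / 2) := by positivity
        nlinarith
    _ = Real.exp ((p + q) / 2 + d) * 2 := by rw [Real.exp_add]; ring

lemma barF_le_bound {X Λ : Type*} [MeasurableSpace Λ]
    (n : ℕ) (hn : 0 < n) (x : Fin n → X) (f : X → ℝ)
    (F : Λ → X → ℝ) (hFm : ∀ i, Measurable fun l => F l (x i))
    (M : ℝ) (hM : ∀ l, normSqV n (fun i => f (x i) - F l (x i)) ≤ M)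
    (μ : Measure Λ) (hμ : μ ∈ PPrime n x F) :
    normSqV n (fun i => f (x i) - barF n x F μ i) ≤ M := by
  haveI hprob : IsProbabilityMeasure μ := hμ.1
  have hn' : (0:ℝ) < n := by exact_mod_cast hn
  have hgint : ∀ i : Fin n, Integrable (fun l => f (x i) - F l (x i)) μ :=
    fun i => (integrable_const _).sub (hμ.2 i)
  have hgb : ∀ (i : Fin n) (l : Λ), (f (x i) - F l (x i)) ^ 2 ≤ n * M := by
    intro i l
    have h := hM l
    rw [normSqV, div_le_iff₀ hn'] at h
    have hterm : (f (x i) - F l (x i)) ^ 2 ≤ ∑ j, (f (x j) - F l (x j)) ^ 2 :=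
      Finset.single_le_sum (f := fun j => (f (x j) - F l (x j)) ^ 2)
        (fun j _ => sq_nonneg _) (Finset.mem_univ i)
    calc (f (x i) - F l (x i)) ^ 2 ≤ ∑ j, (f (x j) - F l (x j)) ^ 2 := hterm
      _ ≤ M * n := h
      _ = n * M := by ring
  have hg2int : ∀ i : Fin n, Integrable (fun l => (f (x i) - F l (x i)) ^ 2) μ := by
    intro i
    refine Integrable.mono' (integrable_const ((n : ℝ) * M)) ?_ ?_
    · exact ((measurable_const.sub (hFm i)).pow_const 2).aestronglyMeasurable
    · exact Filter.Eventually.of_forall fun l => by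
        rw [Real.norm_eq_abs, abs_of_nonneg (sq_nonneg _)]; exact hgb i l
  have key : ∀ i : Fin n, (∫ l, (f (x i) - F l (x i)) ∂μ) ^ 2
      ≤ ∫ l, (f (x i) - F l (x i)) ^ 2 ∂μ := by
    intro i
    set cc := ∫ l, (f (x i) - F l (x i)) ∂μ with hcc
    have h0 : 0 ≤ ∫ l, ((f (x i) - F l (x i)) - cc) ^ 2 ∂μ :=
      integral_nonneg fun l => sq_nonneg _
    have hexpand : ∫ l, ((f (x i) - F l (x i)) - cc) ^ 2 ∂μ
        = (∫ l, (f (x i) - F l (x i)) ^ 2 ∂μ) - 2 * cc * (∫ l, (f (x i) - F l (x i)) ∂μ)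
          + cc ^ 2 := by
      have hfun : (fun l => ((f (x i) - F l (x i)) - cc) ^ 2)
          = fun l => (f (x i) - F l (x i)) ^ 2 - (2 * cc) * (f (x i) - F l (x i)) + cc ^ 2 := by
        funext l; ring
      have ia : Integrable
          (fun l => (f (x i) - F l (x i)) ^ 2 - 2 * cc * (f (x i) - F l (x i))) μ :=
        (hg2int i).sub ((hgint i).const_mul _)
      have ib : Integrable (fun l => 2 * cc * (f (x i) - F l (x i))) μ :=
        (hgint i).const_mul _
      rw [hfun, integral_add ia (integrable_const _),
        integral_sub (hg2int i) ib, integral_const_mul, integral_const]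
      simp
    rw [hexpand, ← hcc] at h0
    nlinarith
  have hbar : ∀ i : Fin n, f (x i) - barF n x F μ i = ∫ l, (f (x i) - F l (x i)) ∂μ := by
    intro i
    rw [barF, integral_sub (integrable_const _) (hμ.2 i), integral_const]
    simp
  have hsum : ∑ i, (∫ l, (f (x i) - F l (x i)) ∂μ) ^ 2 ≤ n * M := by
    calc ∑ i, (∫ l, (f (x i) - F l (x i)) ∂μ) ^ 2
        ≤ ∑ i, ∫ l, (f (x i) - F l (x i)) ^ 2 ∂μ := Finset.sum_le_sum fun i _ => key i
      _ = ∫ l, ∑ i, (f (x i) - F l (x i)) ^ 2 ∂μ :=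
          (integral_finset_sum _ fun i _ => hg2int i).symm
      _ ≤ ∫ _, (n : ℝ) * M ∂μ := by
          refine integral_mono (integrable_finset_sum _ fun i _ => hg2int i)
            (integrable_const _) fun l => ?_
          have h := hM l
          rw [normSqV, div_le_iff₀ hn'] at h
          calc ∑ j, (f (x j) - F l (x j)) ^ 2 ≤ M * n := h
            _ = (n : ℝ) * M := by ring
      _ = (n : ℝ) * M := by simp
  rw [normSqV]
  simp only [hbar]
  rw [div_le_iff₀ hn']
  calc ∑ i, (∫ l, (f (x i) - F l (x i)) ∂μ) ^ 2 ≤ n * M := hsum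
    _ = M * n := by ring

/-- Lemma 3 of the paper: for `β ≥ s²/n + 2 sup_λ ‖f − f_λ‖ₙ²`, the map
`μ ↦ exp(s²‖f̄_{μ'} − f̄_μ‖ₙ²/(nβ²) − ‖f − f̄_μ‖ₙ²/β)` is (midpoint) concave on `𝒫'_Λ`. -/
theorem Gfun_concave
    {X Λ : Type*} [MeasurableSpace Λ]
    (n : ℕ) (hn : 0 < n) (x : Fin n → X) (f : X → ℝ)
    (F : Λ → X → ℝ) (hFm : ∀ i, Measurable fun l => F l (x i))
    (hbdd : BddAbove (Set.range fun l => normSqV n fun i => f (x i) - F l (x i)))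
    (s : ℝ) (hs : 0 < s)
    (β : ℝ)
    (hβ : s ^ 2 / n + 2 * (⨆ l : Λ, normSqV n fun i => f (x i) - F l (x i)) ≤ β)
    (μ' : Measure Λ) (hμ' : μ' ∈ PPrime n x F) :
    ∀ μ₁ ∈ PPrime n x F, ∀ μ₂ ∈ PPrime n x F,
      (Gfun n x f F s β μ' μ₁ + Gfun n x f F s β μ' μ₂) / 2
        ≤ Gfun n x f F s β μ' ((2 : ℝ≥0∞)⁻¹ • (μ₁ + μ₂)) := by
  intro μ₁ hμ₁ μ₂ hμ₂
  haveI hP' : IsProbabilityMeasure μ' := hμ'.1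
  haveI hP1 : IsProbabilityMeasure μ₁ := hμ₁.1
  haveI hP2 : IsProbabilityMeasure μ₂ := hμ₂.1
  have hn' : (0:ℝ) < n := by exact_mod_cast hn
  have hne : Nonempty Λ := by
    by_contra h
    rw [not_nonempty_iff] at h
    have h1 : μ' Set.univ = 1 := measure_univ
    rw [Set.univ_eq_empty_iff.2 h, measure_empty] at h1
    exact zero_ne_one h1
  set M := ⨆ l : Λ, normSqV n fun i => f (x i) - F l (x i) with hMdef
  have hM : ∀ l, normSqV n (fun i => f (x i) - F l (x i)) ≤ M := fun l => le_ciSup hbdd l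
  have hM0 : 0 ≤ M := by
    obtain ⟨l⟩ := hne
    refine le_trans ?_ (hM l)
    rw [normSqV]
    positivity
  have hβpos : 0 < β := by
    have : 0 < s ^ 2 / n := by positivity
    linarith
  set c := s ^ 2 / (n * β) with hc
  have hc0 : 0 ≤ c := by rw [hc]; positivity
  have hβc : β * c = s ^ 2 / n := by rw [hc]; field_simp
  have hc1 : c ≤ 1 := by
    rw [hc, div_le_one (by positivity)]
    have h1 : s ^ 2 / (n : ℝ) ≤ β := by linarith
    rw [div_le_iff₀ hn'] at h1
    linarith
  have hkey : 2 * M ≤ β * (1 - c) := by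
    have : β * (1 - c) = β - s ^ 2 / n := by rw [mul_sub, hβc]; ring
    rw [this]
    linarith
  -- barF of the midpoint measure
  have hmidint : ∀ i : Fin n, Integrable (fun l => F l (x i)) (μ₁ + μ₂) :=
    fun i => (integrable_add_measure.2 ⟨hμ₁.2 i, hμ₂.2 i⟩)
  have hbarmid : ∀ i : Fin n, barF n x F ((2 : ℝ≥0∞)⁻¹ • (μ₁ + μ₂)) i
      = (barF n x F μ₁ i + barF n x F μ₂ i) / 2 := by
    intro i
    rw [barF, integral_smul_measure, integral_add_measure (hμ₁.2 i) (hμ₂.2 i)]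
    rw [barF, barF]
    simp [ENNReal.toReal_inv, smul_eq_mul]
    ring
  have hmidprob : IsProbabilityMeasure ((2 : ℝ≥0∞)⁻¹ • (μ₁ + μ₂)) := by
    constructor
    simp [Measure.add_apply, measure_univ]
    exact ENNReal.inv_two_add_inv_two
  have hmidmem : ((2 : ℝ≥0∞)⁻¹ • (μ₁ + μ₂)) ∈ PPrime n x F := by
    refine ⟨hmidprob, fun i => ?_⟩
    have h2 : ((2 : ℝ≥0∞)⁻¹).toReal ≠ 0 := by simp [ENNReal.toReal_inv]
    exact (hmidint i).smul_measure (by simp)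
  -- rewrite Gfun exponents using c
  have hG : ∀ μ : Measure Λ, Gfun n x f F s β μ' μ
      = Real.exp ((c * (normSqV n fun i => barF n x F μ' i - barF n x F μ i)
        - (normSqV n fun i => f (x i) - barF n x F μ i)) / β) := by
    intro μ
    rw [Gfun, hc]
    congr 1
    field_simp
  -- Jensen bounds
  have h1 : normSqV n (fun i => f (x i) - barF n x F μ' i) ≤ M :=
    barF_le_bound n hn x f F hFm M hM μ' hμ'
  have h2 : normSqV n (fun i => f (x i) - barF n x F μ₁ i) ≤ M :=
    barF_le_bound n hn x f F hFm M hM μ₁ hμ₁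
  have h3 : normSqV n (fun i => f (x i) - barF n x F μ₂ i) ≤ M :=
    barF_le_bound n hn x f F hFm M hM μ₂ hμ₂
  rw [hG μ₁, hG μ₂, hG ((2 : ℝ≥0∞)⁻¹ • (μ₁ + μ₂))]
  simp only [hbarmid]
  exact exp_midpoint_core n hn (fun i => f (x i)) (fun i => barF n x F μ' i)
    (fun i => barF n x F μ₁ i) (fun i => barF n x F μ₂ i) β c M hβpos hc0 hc1 h1 h2 h3 hkey
end
end

section
/- Let π ∈ 𝒫_Λ be such that for all Y' ∈ ℝⁿ and β > 0 the mappings λ ↦ θ_λ(Y') f_λ²(x_i), i = 1,…,n, are π-integrable. Then the map Y ↦ f̂_n(Y) := (f̂_n(x_1, Y),…,f̂_n(x_n, Y))ᵀ is continuously differentiable and, for each i = 1,…,n, its partial derivative with respect to the i-th coordinate Y_i satisfies ∂_i f̂_n(x_i, Y) = (2/β) ( ∫_Λ f_λ²(x_i) θ_λ(Y) π(dλ) − f̂_n²(x_i, Y) ) = (2/β) ∫_Λ ( f_λ(x_i) − f̂_n(x_i, Y) )² θ_λ(Y) π(dλ) ≥ 0. -/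
open MeasureTheory ProbabilityTheory
open scoped ENNReal NNReal

set_option linter.unusedSectionVars false
set_option maxHeartbeats 1000000
noncomputable section

namespace EWA
open Metric

variable {X Λ : Type*} [MeasurableSpace Λ]

/-- unnormalized weight -/
def gW (n : ℕ) (x : Fin n → X) (F : Λ → X → ℝ) (β : ℝ) (Y : Fin n → ℝ) (l : Λ) : ℝ :=
  Real.exp (-β⁻¹ * ∑ j, (Y j - F l (x j)) ^ 2)

/-- gradient of the quadratic form -/
def gS (n : ℕ) (x : Fin n → X) (F : Λ → X → ℝ) (Y : Fin n → ℝ) (l : Λ) :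
    (Fin n → ℝ) →L[ℝ] ℝ :=
  ∑ j, (2 * (Y j - F l (x j))) • ContinuousLinearMap.proj j

lemma gW_pos {n x F β Y} (l : Λ) : 0 < gW (X := X) n x F β Y l := Real.exp_pos _

lemma gW_le_one {n : ℕ} {x : Fin n → X} {F : Λ → X → ℝ} {β : ℝ} (hβ : 0 < β)
    (Y : Fin n → ℝ) (l : Λ) : gW n x F β Y l ≤ 1 := by
  rw [gW, Real.exp_le_one_iff, neg_mul, neg_nonpos]
  positivity

lemma abs_mul_exp_le {β : ℝ} (hβ : 0 < β) (t : ℝ) :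
    |t| * Real.exp (-β⁻¹ * t ^ 2) ≤ Real.sqrt β := by
  set s := Real.sqrt β with hs
  have hs0 : 0 ≤ s := Real.sqrt_nonneg β
  have hs2 : s ^ 2 = β := Real.sq_sqrt hβ.le
  have key : Real.exp (-β⁻¹ * t ^ 2) * (1 + β⁻¹ * t ^ 2) ≤ 1 := by
    have h1 : 1 + β⁻¹ * t ^ 2 ≤ Real.exp (β⁻¹ * t ^ 2) := by
      have := Real.add_one_le_exp (β⁻¹ * t ^ 2); linarith
    calc Real.exp (-β⁻¹ * t ^ 2) * (1 + β⁻¹ * t ^ 2)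
        ≤ Real.exp (-β⁻¹ * t ^ 2) * Real.exp (β⁻¹ * t ^ 2) :=
          mul_le_mul_of_nonneg_left h1 (Real.exp_pos _).le
      _ = 1 := by rw [← Real.exp_add]; simp
  have h2 : |t| ≤ s * (1 + β⁻¹ * t ^ 2) := by
    have h2' : |t| * β ≤ s * (β + t ^ 2) := by
      nlinarith [mul_nonneg hs0 (sq_nonneg (s - |t|)), sq_abs t,
        mul_nonneg (mul_nonneg hs0 hs0) (abs_nonneg t)]
    have : s * (1 + β⁻¹ * t ^ 2) = s * (β + t ^ 2) / β := by field_simp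
    rw [this, le_div_iff₀ hβ]; linarith
  calc |t| * Real.exp (-β⁻¹ * t ^ 2)
      ≤ (s * (1 + β⁻¹ * t ^ 2)) * Real.exp (-β⁻¹ * t ^ 2) :=
        mul_le_mul_of_nonneg_right h2 (Real.exp_pos _).le
    _ = s * (Real.exp (-β⁻¹ * t ^ 2) * (1 + β⁻¹ * t ^ 2)) := by ring
    _ ≤ s * 1 := mul_le_mul_of_nonneg_left key hs0
    _ = s := mul_one s

lemma sq_mul_exp_le {β : ℝ} (hβ : 0 < β) (t : ℝ) :
    t ^ 2 * Real.exp (-β⁻¹ * t ^ 2) ≤ β := by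
  have key : Real.exp (-β⁻¹ * t ^ 2) * (1 + β⁻¹ * t ^ 2) ≤ 1 := by
    have h1 : 1 + β⁻¹ * t ^ 2 ≤ Real.exp (β⁻¹ * t ^ 2) := by
      have := Real.add_one_le_exp (β⁻¹ * t ^ 2); linarith
    calc Real.exp (-β⁻¹ * t ^ 2) * (1 + β⁻¹ * t ^ 2)
        ≤ Real.exp (-β⁻¹ * t ^ 2) * Real.exp (β⁻¹ * t ^ 2) :=
          mul_le_mul_of_nonneg_left h1 (Real.exp_pos _).le
      _ = 1 := by rw [← Real.exp_add]; simp
  have h2 : t ^ 2 ≤ β * (1 + β⁻¹ * t ^ 2) := by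
    rw [mul_add, mul_one, ← mul_assoc, mul_inv_cancel₀ hβ.ne', one_mul]; linarith
  calc t ^ 2 * Real.exp (-β⁻¹ * t ^ 2)
      ≤ (β * (1 + β⁻¹ * t ^ 2)) * Real.exp (-β⁻¹ * t ^ 2) :=
        mul_le_mul_of_nonneg_right h2 (Real.exp_pos _).le
    _ = β * (Real.exp (-β⁻¹ * t ^ 2) * (1 + β⁻¹ * t ^ 2)) := by ring
    _ ≤ β * 1 := mul_le_mul_of_nonneg_left key hβ.le
    _ = β := mul_one β

-- gW is bounded by the exp of any subcollection of the (negated) squares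
lemma gW_le_exp_single {n : ℕ} {x : Fin n → X} {F : Λ → X → ℝ} {β : ℝ} (hβ : 0 < β)
    (Y : Fin n → ℝ) (l : Λ) (j : Fin n) :
    gW n x F β Y l ≤ Real.exp (-β⁻¹ * (Y j - F l (x j)) ^ 2) := by
  rw [gW, Real.exp_le_exp]
  have h : (Y j - F l (x j)) ^ 2 ≤ ∑ k, (Y k - F l (x k)) ^ 2 :=
    Finset.single_le_sum (f := fun k => (Y k - F l (x k)) ^ 2)
      (fun k _ => sq_nonneg _) (Finset.mem_univ j)
  have hb : 0 ≤ β⁻¹ := by positivity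
  nlinarith

lemma gW_le_exp_pair {n : ℕ} {x : Fin n → X} {F : Λ → X → ℝ} {β : ℝ} (hβ : 0 < β)
    (Y : Fin n → ℝ) (l : Λ) {i j : Fin n} (hij : i ≠ j) :
    gW n x F β Y l ≤ Real.exp (-β⁻¹ * (Y i - F l (x i)) ^ 2) *
      Real.exp (-β⁻¹ * (Y j - F l (x j)) ^ 2) := by
  rw [gW, ← Real.exp_add, Real.exp_le_exp]
  have h : (Y i - F l (x i)) ^ 2 + (Y j - F l (x j)) ^ 2 ≤ ∑ k, (Y k - F l (x k)) ^ 2 := by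
    have := Finset.sum_le_sum_of_subset_of_nonneg (Finset.subset_univ {i, j})
      (fun k _ _ => sq_nonneg (Y k - F l (x k)))
    rwa [Finset.sum_pair hij] at this
  have hb : 0 ≤ β⁻¹ := by positivity
  nlinarith

/-- key pointwise product bound -/
lemma prod_bound {n : ℕ} {x : Fin n → X} {F : Λ → X → ℝ} {β : ℝ} (hβ : 0 < β)
    (Y : Fin n → ℝ) (l : Λ) (i j : Fin n) {R : ℝ} (hR : |Y i| ≤ R) :
    |F l (x i)| * |Y j - F l (x j)| * gW n x F β Y l ≤ R * Real.sqrt β + β := by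
  have hR0 : 0 ≤ R := (abs_nonneg _).trans hR
  have hF : |F l (x i)| ≤ R + |Y i - F l (x i)| := by
    have h0 := abs_sub (Y i) (Y i - F l (x i))
    have h1 : Y i - (Y i - F l (x i)) = F l (x i) := by ring
    rw [h1] at h0
    exact h0.trans (add_le_add hR le_rfl)
  have hEt : |Y j - F l (x j)| * Real.exp (-β⁻¹ * (Y j - F l (x j)) ^ 2) ≤ Real.sqrt β :=
    abs_mul_exp_le hβ _
  have hgW0 : 0 < gW n x F β Y l := Real.exp_pos _
  rcases eq_or_ne i j with rfl | hij
  · have hsq : |Y i - F l (x i)| ^ 2 * Real.exp (-β⁻¹ * (Y i - F l (x i)) ^ 2) ≤ β := by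
      rw [sq_abs]; exact sq_mul_exp_le hβ _
    have hg := gW_le_exp_single (x := x) (F := F) hβ Y l i
    calc |F l (x i)| * |Y i - F l (x i)| * gW n x F β Y l
        ≤ (R + |Y i - F l (x i)|) * |Y i - F l (x i)|
            * Real.exp (-β⁻¹ * (Y i - F l (x i)) ^ 2) := by
          gcongr
      _ = R * (|Y i - F l (x i)| * Real.exp (-β⁻¹ * (Y i - F l (x i)) ^ 2))
            + |Y i - F l (x i)| ^ 2 * Real.exp (-β⁻¹ * (Y i - F l (x i)) ^ 2) := by ring
      _ ≤ R * Real.sqrt β + β := add_le_add (mul_le_mul_of_nonneg_left hEt hR0) hsq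
  · have hEs : |Y i - F l (x i)| * Real.exp (-β⁻¹ * (Y i - F l (x i)) ^ 2) ≤ Real.sqrt β :=
      abs_mul_exp_le hβ _
    have hg := gW_le_exp_pair (x := x) (F := F) hβ Y l hij
    have hEs1 : Real.exp (-β⁻¹ * (Y i - F l (x i)) ^ 2) ≤ 1 := by
      rw [Real.exp_le_one_iff, neg_mul, neg_nonpos]; positivity
    calc |F l (x i)| * |Y j - F l (x j)| * gW n x F β Y l
        ≤ (R + |Y i - F l (x i)|) * |Y j - F l (x j)|
            * (Real.exp (-β⁻¹ * (Y i - F l (x i)) ^ 2) *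
              Real.exp (-β⁻¹ * (Y j - F l (x j)) ^ 2)) := by
          gcongr
      _ = R * (|Y j - F l (x j)| * Real.exp (-β⁻¹ * (Y j - F l (x j)) ^ 2))
            * Real.exp (-β⁻¹ * (Y i - F l (x i)) ^ 2)
          + (|Y i - F l (x i)| * Real.exp (-β⁻¹ * (Y i - F l (x i)) ^ 2))
            * (|Y j - F l (x j)| * Real.exp (-β⁻¹ * (Y j - F l (x j)) ^ 2)) := by ring
      _ ≤ R * Real.sqrt β * 1 + Real.sqrt β * Real.sqrt β := by
          refine add_le_add ?_ (mul_le_mul hEs hEt (by positivity) (Real.sqrt_nonneg β))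
          exact mul_le_mul (mul_le_mul_of_nonneg_left hEt hR0) hEs1 (Real.exp_pos _).le
            (by positivity)
      _ = R * Real.sqrt β + β := by
          rw [mul_one, Real.mul_self_sqrt hβ.le]

/-- operator norm bound for scalar multiples of gS -/
lemma smul_gS_norm_le {n : ℕ} {x : Fin n → X} {F : Λ → X → ℝ}
    (Y : Fin n → ℝ) (l : Λ) (c C : ℝ) (hC : 0 ≤ C)
    (h : ∀ j, |c| * |Y j - F l (x j)| ≤ C) :
    ‖c • gS n x F Y l‖ ≤ 2 * n * C := by
  refine ContinuousLinearMap.opNorm_le_bound _ (by positivity) fun v => ?_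
  have hgSv : (c • gS n x F Y l) v = ∑ j, c * (2 * (Y j - F l (x j)) * v j) := by
    simp [gS, ContinuousLinearMap.sum_apply, Finset.mul_sum, mul_assoc]
  rw [hgSv, Real.norm_eq_abs]
  calc |∑ j, c * (2 * (Y j - F l (x j)) * v j)|
      ≤ ∑ j, |c * (2 * (Y j - F l (x j)) * v j)| := Finset.abs_sum_le_sum_abs _ _
    _ ≤ ∑ j : Fin n, 2 * C * ‖v‖ := by
        refine Finset.sum_le_sum fun j _ => ?_
        have : |c * (2 * (Y j - F l (x j)) * v j)|
            = 2 * (|c| * |Y j - F l (x j)|) * |v j| := by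
          rw [abs_mul, abs_mul, abs_mul]; simp [abs_of_nonneg]; ring
        rw [this]
        have hv : |v j| ≤ ‖v‖ := by
          have := norm_le_pi_norm v j; rwa [Real.norm_eq_abs] at this
        exact mul_le_mul (by nlinarith [h j, abs_nonneg c]) hv (abs_nonneg _) (by positivity)
    _ = 2 * n * C * ‖v‖ := by
        rw [Finset.sum_const, Finset.card_univ, Fintype.card_fin, nsmul_eq_mul]; ring
def gD (n : ℕ) (x : Fin n → X) (F : Λ → X → ℝ) (β : ℝ) (Y : Fin n → ℝ) (l : Λ) :
    (Fin n → ℝ) →L[ℝ] ℝ :=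
  (gW n x F β Y l * -β⁻¹) • gS n x F Y l

lemma hasFDerivAt_sumSq (n : ℕ) (x : Fin n → X) (F : Λ → X → ℝ) (Y : Fin n → ℝ) (l : Λ) :
    HasFDerivAt (fun Y' : Fin n → ℝ => ∑ j, (Y' j - F l (x j)) ^ 2)
      (gS n x F Y l) Y := by
  have h : ∀ j : Fin n, HasFDerivAt (fun Y' : Fin n → ℝ => (Y' j - F l (x j)) ^ 2)
      ((2 * (Y j - F l (x j))) • (ContinuousLinearMap.proj j :
        (Fin n → ℝ) →L[ℝ] ℝ)) Y := by
    intro j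
    have hp : HasFDerivAt (fun Y' : Fin n → ℝ => Y' j - F l (x j))
        (ContinuousLinearMap.proj j : (Fin n → ℝ) →L[ℝ] ℝ) Y := by
      have hp0 : HasFDerivAt (fun Y' : Fin n → ℝ => Y' j)
          (ContinuousLinearMap.proj j : (Fin n → ℝ) →L[ℝ] ℝ) Y :=
        (ContinuousLinearMap.proj j : (Fin n → ℝ) →L[ℝ] ℝ).hasFDerivAt
      exact hp0.sub_const _
    have := hp.mul hp
    have h2 : (Y j - F l (x j)) • (ContinuousLinearMap.proj j : (Fin n → ℝ) →L[ℝ] ℝ)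
        + (Y j - F l (x j)) • (ContinuousLinearMap.proj j : (Fin n → ℝ) →L[ℝ] ℝ)
        = (2 * (Y j - F l (x j))) • (ContinuousLinearMap.proj j :
          (Fin n → ℝ) →L[ℝ] ℝ) := by
      rw [two_mul, add_smul]
    rw [h2] at this
    have h3 : (fun Y' : Fin n → ℝ => (Y' j - F l (x j)) * (Y' j - F l (x j)))
        = fun Y' : Fin n → ℝ => (Y' j - F l (x j)) ^ 2 := by
      funext Y'; ring
    rw [← h3]; exact this
  exact HasFDerivAt.fun_sum (fun j _ => h j)

lemma hasFDerivAt_gW (n : ℕ) (x : Fin n → X) (F : Λ → X → ℝ) (β : ℝ)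
    (Y : Fin n → ℝ) (l : Λ) :
    HasFDerivAt (fun Y' => gW n x F β Y' l) (gD n x F β Y l) Y := by
  have h1 := ((hasFDerivAt_sumSq n x F Y l).const_mul (-β⁻¹)).exp
  have h2 : Real.exp (-β⁻¹ * ∑ j, (Y j - F l (x j)) ^ 2) • ((-β⁻¹) • gS n x F Y l)
      = gD n x F β Y l := by
    rw [gD, gW, smul_smul]
  rw [h2] at h1
  exact h1

lemma gS_apply_single (n : ℕ) (x : Fin n → X) (F : Λ → X → ℝ) (Y : Fin n → ℝ)
    (l : Λ) (i : Fin n) :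
    gS n x F Y l (Pi.single i 1) = 2 * (Y i - F l (x i)) := by
  rw [gS, ContinuousLinearMap.sum_apply]
  have : ∀ j : Fin n, ((2 * (Y j - F l (x j))) • (ContinuousLinearMap.proj j :
      (Fin n → ℝ) →L[ℝ] ℝ)) (Pi.single i 1) = (2 * (Y j - F l (x j))) * (Pi.single i (1:ℝ) : Fin n → ℝ) j := by
    intro j; simp [ContinuousLinearMap.proj_apply]
  rw [Finset.sum_congr rfl fun j _ => this j]
  rw [Finset.sum_eq_single i]
  · simp
  · intro j _ hj; simp [Pi.single_eq_of_ne hj]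
  · intro h; exact absurd (Finset.mem_univ i) h

lemma measurable_sumSq (n : ℕ) (x : Fin n → X) (F : Λ → X → ℝ)
    (hFm : ∀ i, Measurable fun l => F l (x i)) (Y : Fin n → ℝ) :
    Measurable (fun l : Λ => ∑ j, (Y j - F l (x j)) ^ 2) :=
  Finset.measurable_sum _ fun j _ => ((measurable_const.sub (hFm j)).pow_const 2)

lemma measurable_gW (n : ℕ) (x : Fin n → X) (F : Λ → X → ℝ) (β : ℝ)
    (hFm : ∀ i, Measurable fun l => F l (x i)) (Y : Fin n → ℝ) :
    Measurable (fun l => gW n x F β Y l) :=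
  ((measurable_sumSq n x F hFm Y).const_mul (-β⁻¹)).exp

lemma stronglyMeasurable_gS (n : ℕ) (x : Fin n → X) (F : Λ → X → ℝ)
    (hFm : ∀ i, Measurable fun l => F l (x i)) (Y : Fin n → ℝ) :
    StronglyMeasurable (fun l => gS n x F Y l) := by
  apply Finset.stronglyMeasurable_fun_sum
  intro j _
  exact ((measurable_const.sub (hFm j)).const_mul 2).stronglyMeasurable.smul_const _

lemma stronglyMeasurable_gD (n : ℕ) (x : Fin n → X) (F : Λ → X → ℝ) (β : ℝ)
    (hFm : ∀ i, Measurable fun l => F l (x i)) (Y : Fin n → ℝ) :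
    StronglyMeasurable (fun l => gD n x F β Y l) :=
  (((measurable_gW n x F β hFm Y).mul_const (-β⁻¹)).stronglyMeasurable).smul
    (stronglyMeasurable_gS n x F hFm Y)

lemma stronglyMeasurable_FgD (n : ℕ) (x : Fin n → X) (F : Λ → X → ℝ) (β : ℝ)
    (hFm : ∀ i, Measurable fun l => F l (x i)) (Y : Fin n → ℝ) (i : Fin n) :
    StronglyMeasurable (fun l => F l (x i) • gD n x F β Y l) :=
  (hFm i).stronglyMeasurable.smul (stronglyMeasurable_gD n x F β hFm Y)

lemma continuous_gW (n : ℕ) (x : Fin n → X) (F : Λ → X → ℝ) (β : ℝ) (l : Λ) :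
    Continuous (fun Y => gW n x F β Y l) :=
  Real.continuous_exp.comp (continuous_const.mul
    (continuous_finset_sum _ fun j _ => ((continuous_apply j).sub continuous_const).pow 2))

lemma continuous_gS (n : ℕ) (x : Fin n → X) (F : Λ → X → ℝ) (l : Λ) :
    Continuous (fun Y => gS n x F Y l) :=
  continuous_finset_sum _ fun j _ =>
    (continuous_const.mul ((continuous_apply j).sub continuous_const)).smul continuous_const

lemma continuous_gD (n : ℕ) (x : Fin n → X) (F : Λ → X → ℝ) (β : ℝ) (l : Λ) :
    Continuous (fun Y => gD n x F β Y l) :=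
  ((continuous_gW n x F β l).mul continuous_const).smul (continuous_gS n x F l)


section Integral

variable {X Λ : Type*} [MeasurableSpace Λ]
variable (n : ℕ) (x : Fin n → X) (F : Λ → X → ℝ) (β : ℝ) (π : Measure Λ)

lemma integrable_gW [IsProbabilityMeasure π] (hFm : ∀ i, Measurable fun l => F l (x i))
    (hβ : 0 < β) (Y : Fin n → ℝ) : Integrable (fun l => gW n x F β Y l) π := by
  refine Integrable.mono' (integrable_const 1)
    (measurable_gW n x F β hFm Y).aestronglyMeasurable ?_
  refine Filter.Eventually.of_forall fun l => ?_
  rw [Real.norm_eq_abs, abs_of_pos (gW_pos l)]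
  exact gW_le_one hβ Y l

lemma DD_pos [IsProbabilityMeasure π] (hFm : ∀ i, Measurable fun l => F l (x i))
    (hβ : 0 < β) (Y : Fin n → ℝ) : 0 < ∫ l, gW n x F β Y l ∂π := by
  rw [integral_pos_iff_support_of_nonneg (fun l => (gW_pos (X := X) (n := n) (x := x)
    (F := F) (β := β) (Y := Y) l).le) (integrable_gW n x F β π hFm hβ Y)]
  have hs : Function.support (fun l : Λ => gW n x F β Y l) = Set.univ :=
    Set.eq_univ_iff_forall.mpr fun l => Function.mem_support.mpr (gW_pos l).ne'
  rw [hs]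
  simp

lemma expW_eq (hn : 0 < n) (Y : Fin n → ℝ) (l : Λ) :
    expWeight n x F π β Y l = gW n x F β Y l / ∫ w, gW n x F β Y w ∂π := by
  have hn' : (n : ℝ) ≠ 0 := Nat.cast_ne_zero.mpr hn.ne'
  have hexp : ∀ m : Λ, Real.exp (-(n : ℝ) * normSqV n (fun i => Y i - F m (x i)) / β)
      = gW n x F β Y m := by
    intro m
    rw [gW, normSqV]
    congr 1
    field_simp
  rw [expWeight]
  simp only [hexp]

lemma integrable_gW_sq [IsProbabilityMeasure π] (hFm : ∀ i, Measurable fun l => F l (x i))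
    (hn : 0 < n)
    (hπint : ∀ (Y' : Fin n → ℝ) (β' : ℝ), 0 < β' → ∀ i,
      Integrable (fun l => expWeight n x F π β' Y' l * (F l (x i)) ^ 2) π)
    (hβ : 0 < β) (Y : Fin n → ℝ) (i : Fin n) :
    Integrable (fun l => gW n x F β Y l * F l (x i) ^ 2) π := by
  have hDv := DD_pos n x F β π hFm hβ Y
  have heq : (fun l => gW n x F β Y l * F l (x i) ^ 2)
      = fun l => (∫ w, gW n x F β Y w ∂π) * (expWeight n x F π β Y l * F l (x i) ^ 2) := by
    funext l
    rw [expW_eq n x F β π hn]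
    field_simp
  rw [heq]
  exact (hπint Y β hβ i).const_mul _

lemma integrable_gW_F [IsProbabilityMeasure π] (hFm : ∀ i, Measurable fun l => F l (x i))
    (hn : 0 < n)
    (hπint : ∀ (Y' : Fin n → ℝ) (β' : ℝ), 0 < β' → ∀ i,
      Integrable (fun l => expWeight n x F π β' Y' l * (F l (x i)) ^ 2) π)
    (hβ : 0 < β) (Y : Fin n → ℝ) (i : Fin n) :
    Integrable (fun l => gW n x F β Y l * F l (x i)) π := by
  refine Integrable.mono' ((integrable_gW n x F β π hFm hβ Y).add
    (integrable_gW_sq n x F β π hFm hn hπint hβ Y i))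
    ((measurable_gW n x F β hFm Y).mul (hFm i)).aestronglyMeasurable ?_
  refine Filter.Eventually.of_forall fun l => ?_
  rw [Real.norm_eq_abs, abs_mul, abs_of_pos (gW_pos l)]
  have h1 : |F l (x i)| ≤ 1 + F l (x i) ^ 2 := by
    nlinarith [sq_abs (F l (x i)), abs_nonneg (F l (x i)), sq_nonneg (|F l (x i)| - 1)]
  have h2 := mul_le_mul_of_nonneg_left h1 (gW_pos (X := X) (n := n) (x := x) (F := F)
    (β := β) (Y := Y) l).le
  simp only [Pi.add_apply]
  nlinarith [gW_pos (X := X) (n := n) (x := x) (F := F) (β := β) (Y := Y) l]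

lemma norm_gD_le (hβ : 0 < β) (Y : Fin n → ℝ) (l : Λ) :
    ‖gD n x F β Y l‖ ≤ 2 * n * (β⁻¹ * Real.sqrt β) := by
  rw [gD]
  refine smul_gS_norm_le Y l _ _ (by positivity) fun j => ?_
  rw [abs_mul, abs_of_pos (gW_pos l), abs_neg, abs_inv, abs_of_pos hβ]
  have h1 : |Y j - F l (x j)| * gW n x F β Y l ≤ Real.sqrt β :=
    (mul_le_mul_of_nonneg_left (gW_le_exp_single hβ Y l j) (abs_nonneg _)).trans
      (abs_mul_exp_le hβ _)
  have h2 : gW n x F β Y l * β⁻¹ * |Y j - F l (x j)|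
      = β⁻¹ * (|Y j - F l (x j)| * gW n x F β Y l) := by ring
  rw [h2]
  exact mul_le_mul_of_nonneg_left h1 (by positivity)

lemma norm_FgD_le (hβ : 0 < β) {R : ℝ} (Y : Fin n → ℝ) (l : Λ) (i : Fin n)
    (hR : |Y i| ≤ R) :
    ‖F l (x i) • gD n x F β Y l‖ ≤ 2 * n * (β⁻¹ * (R * Real.sqrt β + β)) := by
  have hR0 : 0 ≤ R := (abs_nonneg _).trans hR
  rw [gD, smul_smul]
  refine smul_gS_norm_le Y l _ _ (by positivity) fun j => ?_
  rw [abs_mul, abs_mul, abs_of_pos (gW_pos l), abs_neg, abs_inv, abs_of_pos hβ]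
  have h1 := prod_bound (x := x) (F := F) hβ Y l i j hR
  have h2 : |F l (x i)| * (gW n x F β Y l * β⁻¹) * |Y j - F l (x j)|
      = β⁻¹ * (|F l (x i)| * |Y j - F l (x j)| * gW n x F β Y l) := by ring
  rw [h2]
  exact mul_le_mul_of_nonneg_left h1 (by positivity)

lemma integrable_gD [IsProbabilityMeasure π] (hFm : ∀ i, Measurable fun l => F l (x i))
    (hβ : 0 < β) (Y : Fin n → ℝ) : Integrable (fun l => gD n x F β Y l) π :=
  (integrable_const _).mono' (stronglyMeasurable_gD n x F β hFm Y).aestronglyMeasurable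
    (Filter.Eventually.of_forall fun l => norm_gD_le n x F β hβ Y l)

lemma integrable_FgD [IsProbabilityMeasure π] (hFm : ∀ i, Measurable fun l => F l (x i))
    (hβ : 0 < β) (Y : Fin n → ℝ) (i : Fin n) :
    Integrable (fun l => F l (x i) • gD n x F β Y l) π :=
  (integrable_const _).mono' (stronglyMeasurable_FgD n x F β hFm Y i).aestronglyMeasurable
    (Filter.Eventually.of_forall fun l => norm_FgD_le n x F β hβ Y l i le_rfl)

lemma hasFDerivAt_intDD [IsProbabilityMeasure π] (hFm : ∀ i, Measurable fun l => F l (x i))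
    (hβ : 0 < β) (Y₀ : Fin n → ℝ) :
    HasFDerivAt (fun Y => ∫ l, gW n x F β Y l ∂π) (∫ l, gD n x F β Y₀ l ∂π) Y₀ := by
  refine hasFDerivAt_integral_of_dominated_of_fderiv_le
    (F' := fun Y l => gD n x F β Y l) (bound := fun _ => 2 * n * (β⁻¹ * Real.sqrt β))
    (ball_mem_nhds Y₀ one_pos) ?_ ?_ ?_ ?_ ?_ ?_
  · exact Filter.Eventually.of_forall fun Y =>
      (measurable_gW n x F β hFm Y).aestronglyMeasurable
  · exact integrable_gW n x F β π hFm hβ Y₀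
  · exact (stronglyMeasurable_gD n x F β hFm Y₀).aestronglyMeasurable
  · exact Filter.Eventually.of_forall fun l Y _ => norm_gD_le n x F β hβ Y l
  · exact integrable_const _
  · exact Filter.Eventually.of_forall fun l Y _ => hasFDerivAt_gW n x F β Y l

lemma hasFDerivAt_intNN [IsProbabilityMeasure π] (hFm : ∀ i, Measurable fun l => F l (x i))
    (hn : 0 < n)
    (hπint : ∀ (Y' : Fin n → ℝ) (β' : ℝ), 0 < β' → ∀ i,
      Integrable (fun l => expWeight n x F π β' Y' l * (F l (x i)) ^ 2) π)
    (hβ : 0 < β) (i : Fin n) (Y₀ : Fin n → ℝ) :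
    HasFDerivAt (fun Y => ∫ l, gW n x F β Y l * F l (x i) ∂π)
      (∫ l, F l (x i) • gD n x F β Y₀ l ∂π) Y₀ := by
  refine hasFDerivAt_integral_of_dominated_of_fderiv_le
    (F' := fun Y l => F l (x i) • gD n x F β Y l)
    (bound := fun _ => 2 * n * (β⁻¹ * ((‖Y₀‖ + 1) * Real.sqrt β + β)))
    (ball_mem_nhds Y₀ one_pos) ?_ ?_ ?_ ?_ ?_ ?_
  · exact Filter.Eventually.of_forall fun Y =>
      ((measurable_gW n x F β hFm Y).mul (hFm i)).aestronglyMeasurable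
  · exact integrable_gW_F n x F β π hFm hn hπint hβ Y₀ i
  · exact (stronglyMeasurable_FgD n x F β hFm Y₀ i).aestronglyMeasurable
  · refine Filter.Eventually.of_forall fun l Y hY => ?_
    refine norm_FgD_le n x F β hβ Y l i ?_
    have h1 : |Y i| ≤ ‖Y‖ := by
      have := norm_le_pi_norm Y i
      rwa [Real.norm_eq_abs] at this
    have h2 : ‖Y‖ - ‖Y₀‖ ≤ ‖Y - Y₀‖ := norm_sub_norm_le Y Y₀
    rw [mem_ball, dist_eq_norm] at hY
    linarith
  · exact integrable_const _
  · exact Filter.Eventually.of_forall fun l Y _ =>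
      (hasFDerivAt_gW n x F β Y l).mul_const (F l (x i))

lemma continuous_intDD [IsProbabilityMeasure π] (hFm : ∀ i, Measurable fun l => F l (x i))
    (hβ : 0 < β) : Continuous fun Y => ∫ l, gD n x F β Y l ∂π := by
  rw [continuous_iff_continuousAt]
  intro Y₀
  refine continuousAt_of_dominated ?_ ?_ (integrable_const (2 * n * (β⁻¹ * Real.sqrt β))) ?_
  · exact Filter.Eventually.of_forall fun Y =>
      (stronglyMeasurable_gD n x F β hFm Y).aestronglyMeasurable
  · exact Filter.Eventually.of_forall fun Y =>
      Filter.Eventually.of_forall fun l => norm_gD_le n x F β hβ Y l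
  · exact Filter.Eventually.of_forall fun l => (continuous_gD n x F β l).continuousAt

lemma continuous_intFgD [IsProbabilityMeasure π] (hFm : ∀ i, Measurable fun l => F l (x i))
    (hβ : 0 < β) (i : Fin n) :
    Continuous fun Y => ∫ l, F l (x i) • gD n x F β Y l ∂π := by
  rw [continuous_iff_continuousAt]
  intro Y₀
  refine continuousAt_of_dominated
    (bound := fun _ => 2 * n * (β⁻¹ * ((‖Y₀‖ + 1) * Real.sqrt β + β))) ?_ ?_
    (integrable_const _) ?_
  · exact Filter.Eventually.of_forall fun Y =>
      (stronglyMeasurable_FgD n x F β hFm Y i).aestronglyMeasurable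
  · filter_upwards [ball_mem_nhds Y₀ one_pos] with Y hY
    refine Filter.Eventually.of_forall fun l => ?_
    refine norm_FgD_le n x F β hβ Y l i ?_
    have h1 : |Y i| ≤ ‖Y‖ := by
      have := norm_le_pi_norm Y i
      rwa [Real.norm_eq_abs] at this
    have h2 : ‖Y‖ - ‖Y₀‖ ≤ ‖Y - Y₀‖ := norm_sub_norm_le Y Y₀
    rw [mem_ball, dist_eq_norm] at hY
    linarith
  · exact Filter.Eventually.of_forall fun l =>
      (((continuous_gD n x F β l).const_smul (F l (x i)))).continuousAt

lemma contDiff_intDD [IsProbabilityMeasure π] (hFm : ∀ i, Measurable fun l => F l (x i))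
    (hβ : 0 < β) : ContDiff ℝ 1 (fun Y => ∫ l, gW n x F β Y l ∂π) := by
  rw [contDiff_one_iff_fderiv]
  refine ⟨fun Y => (hasFDerivAt_intDD n x F β π hFm hβ Y).differentiableAt, ?_⟩
  have h : (fderiv ℝ fun Y => ∫ l, gW n x F β Y l ∂π)
      = fun Y => ∫ l, gD n x F β Y l ∂π :=
    funext fun Y => (hasFDerivAt_intDD n x F β π hFm hβ Y).fderiv
  rw [h]
  exact continuous_intDD n x F β π hFm hβ

lemma contDiff_intNN [IsProbabilityMeasure π] (hFm : ∀ i, Measurable fun l => F l (x i))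
    (hn : 0 < n)
    (hπint : ∀ (Y' : Fin n → ℝ) (β' : ℝ), 0 < β' → ∀ i,
      Integrable (fun l => expWeight n x F π β' Y' l * (F l (x i)) ^ 2) π)
    (hβ : 0 < β) (i : Fin n) :
    ContDiff ℝ 1 (fun Y => ∫ l, gW n x F β Y l * F l (x i) ∂π) := by
  rw [contDiff_one_iff_fderiv]
  refine ⟨fun Y => (hasFDerivAt_intNN n x F β π hFm hn hπint hβ i Y).differentiableAt, ?_⟩
  have h : (fderiv ℝ fun Y => ∫ l, gW n x F β Y l * F l (x i) ∂π)
      = fun Y => ∫ l, F l (x i) • gD n x F β Y l ∂π :=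
    funext fun Y => (hasFDerivAt_intNN n x F β π hFm hn hπint hβ i Y).fderiv
  rw [h]
  exact continuous_intFgD n x F β π hFm hβ i

end Integral

end EWA

open EWA in
/-- Differentiability of the exponentially weighted aggregate and the formula for its
partial derivatives (from the proof of Theorem 1 of the paper): `Y ↦ f̂ₙ(Y)` is
continuously differentiable and
`∂ᵢ f̂ₙ(xᵢ,Y) = (2/β)(∫ f_λ²(xᵢ)θ_λ(Y)π(dλ) − f̂ₙ²(xᵢ,Y))
             = (2/β)∫ (f_λ(xᵢ) − f̂ₙ(xᵢ,Y))²θ_λ(Y)π(dλ) ≥ 0`. -/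
theorem aggregate_partial_derivative
    {X Λ : Type*} [MeasurableSpace Λ]
    (n : ℕ) (hn : 0 < n) (x : Fin n → X)
    (F : Λ → X → ℝ) (hFm : ∀ i, Measurable fun l => F l (x i))
    (π : Measure Λ) [IsProbabilityMeasure π]
    (hπint : ∀ (Y' : Fin n → ℝ) (β' : ℝ), 0 < β' → ∀ i,
      Integrable (fun l => expWeight n x F π β' Y' l * (F l (x i)) ^ 2) π)
    (β : ℝ) (hβ : 0 < β) :
    ContDiff ℝ 1 (fun Y : Fin n → ℝ => fun i => aggregate n x F π β Y (x i)) ∧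
    ∀ (Y : Fin n → ℝ) (i : Fin n),
      fderiv ℝ (fun Y' : Fin n → ℝ => aggregate n x F π β Y' (x i)) Y (Pi.single i 1)
          = (2 / β) * ((∫ l, (F l (x i)) ^ 2 * expWeight n x F π β Y l ∂π)
              - (aggregate n x F π β Y (x i)) ^ 2) ∧
      fderiv ℝ (fun Y' : Fin n → ℝ => aggregate n x F π β Y' (x i)) Y (Pi.single i 1)
          = (2 / β) * ∫ l, (F l (x i) - aggregate n x F π β Y (x i)) ^ 2
              * expWeight n x F π β Y l ∂π ∧
      0 ≤ fderiv ℝ (fun Y' : Fin n → ℝ => aggregate n x F π β Y' (x i)) Y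
            (Pi.single i 1) := by
  classical
  have hDpos : ∀ Y : Fin n → ℝ, 0 < ∫ l, gW n x F β Y l ∂π :=
    fun Y => DD_pos n x F β π hFm hβ Y
  have agg_eq : ∀ (Y : Fin n → ℝ) (i : Fin n),
      aggregate n x F π β Y (x i)
        = (∫ l, gW n x F β Y l * F l (x i) ∂π) / ∫ l, gW n x F β Y l ∂π := by
    intro Y i
    rw [aggregate]
    simp only [expW_eq n x F β π hn]
    have h1 : (fun l => gW n x F β Y l / (∫ w, gW n x F β Y w ∂π) * F l (x i))
        = fun l => (∫ w, gW n x F β Y w ∂π)⁻¹ * (gW n x F β Y l * F l (x i)) := by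
      funext l; rw [div_eq_mul_inv]; ring
    rw [h1, integral_const_mul, inv_mul_eq_div]
  have hcd : ∀ i : Fin n, ContDiff ℝ 1 fun Y : Fin n → ℝ => aggregate n x F π β Y (x i) := by
    intro i
    have h2 : (fun Y : Fin n → ℝ => aggregate n x F π β Y (x i))
        = fun Y => (∫ l, gW n x F β Y l * F l (x i) ∂π) / ∫ l, gW n x F β Y l ∂π :=
      funext fun Y => agg_eq Y i
    rw [h2]
    exact (contDiff_intNN n x F β π hFm hn hπint hβ i).div
      (contDiff_intDD n x F β π hFm hβ) fun Y => (hDpos Y).ne'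
  refine ⟨contDiff_pi.mpr hcd, ?_⟩
  intro Y i
  have hNint := integrable_FgD n x F β π hFm hβ Y i
  have hDint := integrable_gD n x F β π hFm hβ Y
  have hIgW := integrable_gW n x F β π hFm hβ Y
  have hIgF := integrable_gW_F n x F β π hFm hn hπint hβ Y i
  have hIgF2 := integrable_gW_sq n x F β π hFm hn hπint hβ Y i
  have hNe : (∫ l, F l (x i) • gD n x F β Y l ∂π) (Pi.single i 1)
      = (-2 * β⁻¹) * (Y i * (∫ l, gW n x F β Y l * F l (x i) ∂π)
          - ∫ l, gW n x F β Y l * F l (x i) ^ 2 ∂π) := by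
    rw [ContinuousLinearMap.integral_apply hNint]
    have hpt : ∀ l : Λ, (F l (x i) • gD n x F β Y l) (Pi.single i 1)
        = (-2 * β⁻¹) * (Y i * (gW n x F β Y l * F l (x i))
            - gW n x F β Y l * F l (x i) ^ 2) := by
      intro l
      rw [ContinuousLinearMap.smul_apply, gD, ContinuousLinearMap.smul_apply,
        gS_apply_single]
      simp only [smul_eq_mul]
      ring
    simp only [hpt]
    rw [integral_const_mul, integral_sub (hIgF.const_mul (Y i)) hIgF2, integral_const_mul]
  have hDe : (∫ l, gD n x F β Y l ∂π) (Pi.single i 1)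
      = (-2 * β⁻¹) * (Y i * (∫ l, gW n x F β Y l ∂π)
          - ∫ l, gW n x F β Y l * F l (x i) ∂π) := by
    rw [ContinuousLinearMap.integral_apply hDint]
    have hpt : ∀ l : Λ, (gD n x F β Y l) (Pi.single i 1)
        = (-2 * β⁻¹) * (Y i * gW n x F β Y l - gW n x F β Y l * F l (x i)) := by
      intro l
      rw [gD, ContinuousLinearMap.smul_apply, gS_apply_single]
      simp only [smul_eq_mul]
      ring
    simp only [hpt]
    rw [integral_const_mul, integral_sub (hIgW.const_mul (Y i)) hIgF, integral_const_mul]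
  have h0 : Y + (0:ℝ) • (Pi.single i 1 : Fin n → ℝ) = Y := by simp
  have hline : HasDerivAt (fun t : ℝ => Y + t • (Pi.single i 1 : Fin n → ℝ))
      (Pi.single i 1) 0 := by
    simpa using ((hasDerivAt_id (0:ℝ)).smul_const (Pi.single i 1 : Fin n → ℝ)).const_add Y
  have hNc : HasDerivAt (fun t : ℝ =>
        ∫ l, gW n x F β (Y + t • (Pi.single i 1 : Fin n → ℝ)) l * F l (x i) ∂π)
      ((∫ l, F l (x i) • gD n x F β Y l ∂π) (Pi.single i 1)) 0 :=
    (hasFDerivAt_intNN n x F β π hFm hn hπint hβ i Y).comp_hasDerivAt_of_eq 0 hline h0.symm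
  have hDc : HasDerivAt (fun t : ℝ => ∫ l, gW n x F β (Y + t • (Pi.single i 1 : Fin n → ℝ)) l ∂π)
      ((∫ l, gD n x F β Y l ∂π) (Pi.single i 1)) 0 :=
    (hasFDerivAt_intDD n x F β π hFm hβ Y).comp_hasDerivAt_of_eq 0 hline h0.symm
  have hne : (∫ l, gW n x F β (Y + (0:ℝ) • (Pi.single i 1 : Fin n → ℝ)) l ∂π) ≠ 0 := by
    rw [h0]; exact (hDpos Y).ne'
  have hQ := hNc.div hDc hne
  simp only [h0] at hQ
  have hQ' : HasDerivAt (fun t : ℝ => aggregate n x F π β (Y + t • (Pi.single i 1 : Fin n → ℝ)) (x i))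
      (((∫ l, F l (x i) • gD n x F β Y l ∂π) (Pi.single i 1)
          * ∫ l, gW n x F β Y l ∂π
        - (∫ l, gW n x F β Y l * F l (x i) ∂π)
          * (∫ l, gD n x F β Y l ∂π) (Pi.single i 1))
        / (∫ l, gW n x F β Y l ∂π) ^ 2) 0 := by
    have hfe : (fun t : ℝ => aggregate n x F π β (Y + t • (Pi.single i 1 : Fin n → ℝ)) (x i))
        = fun t : ℝ => (∫ l, gW n x F β (Y + t • (Pi.single i 1 : Fin n → ℝ)) l * F l (x i) ∂π)
            / ∫ l, gW n x F β (Y + t • (Pi.single i 1 : Fin n → ℝ)) l ∂π :=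
      funext fun t => agg_eq _ i
    rw [hfe]
    exact hQ
  have h1 : HasDerivAt (fun t : ℝ => aggregate n x F π β (Y + t • (Pi.single i 1 : Fin n → ℝ)) (x i))
      (fderiv ℝ (fun Y' : Fin n → ℝ => aggregate n x F π β Y' (x i)) Y (Pi.single i 1)) 0 :=
    (((hcd i).differentiable one_ne_zero) Y).hasFDerivAt.comp_hasDerivAt_of_eq 0 hline h0.symm
  have hval := h1.unique hQ'
  rw [hNe, hDe] at hval
  -- identification of the θ-integrals
  have hIexp : ∫ l, F l (x i) ^ 2 * expWeight n x F π β Y l ∂π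
      = (∫ l, gW n x F β Y l * F l (x i) ^ 2 ∂π) / ∫ l, gW n x F β Y l ∂π := by
    simp only [expW_eq n x F β π hn]
    have h1 : (fun l => F l (x i) ^ 2 * (gW n x F β Y l / ∫ w, gW n x F β Y w ∂π))
        = fun l => (∫ w, gW n x F β Y w ∂π)⁻¹ * (gW n x F β Y l * F l (x i) ^ 2) := by
      funext l; rw [div_eq_mul_inv]; ring
    rw [h1, integral_const_mul, inv_mul_eq_div]
  have hθF : ∫ l, F l (x i) * expWeight n x F π β Y l ∂π
      = (∫ l, gW n x F β Y l * F l (x i) ∂π) / ∫ l, gW n x F β Y l ∂π := by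
    simp only [expW_eq n x F β π hn]
    have h1 : (fun l => F l (x i) * (gW n x F β Y l / ∫ w, gW n x F β Y w ∂π))
        = fun l => (∫ w, gW n x F β Y w ∂π)⁻¹ * (gW n x F β Y l * F l (x i)) := by
      funext l; rw [div_eq_mul_inv]; ring
    rw [h1, integral_const_mul, inv_mul_eq_div]
  have hθ1 : ∫ l, expWeight n x F π β Y l ∂π = 1 := by
    simp only [expW_eq n x F β π hn]
    rw [integral_div, div_self (hDpos Y).ne']
  -- goal 1
  have hG1 : fderiv ℝ (fun Y' : Fin n → ℝ => aggregate n x F π β Y' (x i)) Y (Pi.single i 1)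
      = (2 / β) * ((∫ l, (F l (x i)) ^ 2 * expWeight n x F π β Y l ∂π)
          - (aggregate n x F π β Y (x i)) ^ 2) := by
    rw [hval, hIexp, agg_eq Y i]
    have hb : β ≠ 0 := hβ.ne'
    have hd : (∫ l, gW n x F β Y l ∂π) ≠ 0 := (hDpos Y).ne'
    field_simp
    ring
  -- the squared-deviation integral
  have hθint : Integrable (fun l => expWeight n x F π β Y l) π := by
    have h1 : (fun l => expWeight n x F π β Y l)
        = fun l => (∫ w, gW n x F β Y w ∂π)⁻¹ * gW n x F β Y l := by
      funext l; rw [expW_eq n x F β π hn, div_eq_mul_inv]; ring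
    rw [h1]; exact hIgW.const_mul _
  have hθFint : Integrable (fun l => F l (x i) * expWeight n x F π β Y l) π := by
    have h1 : (fun l => F l (x i) * expWeight n x F π β Y l)
        = fun l => (∫ w, gW n x F β Y w ∂π)⁻¹ * (gW n x F β Y l * F l (x i)) := by
      funext l; rw [expW_eq n x F β π hn, div_eq_mul_inv]; ring
    rw [h1]; exact hIgF.const_mul _
  have hθF2int : Integrable (fun l => F l (x i) ^ 2 * expWeight n x F π β Y l) π := by
    have h1 : (fun l => F l (x i) ^ 2 * expWeight n x F π β Y l)
        = fun l => expWeight n x F π β Y l * F l (x i) ^ 2 := by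
      funext l; ring
    rw [h1]; exact hπint Y β hβ i
  have hsplit : ∫ l, (F l (x i) - aggregate n x F π β Y (x i)) ^ 2
        * expWeight n x F π β Y l ∂π
      = (∫ l, F l (x i) ^ 2 * expWeight n x F π β Y l ∂π)
        - 2 * aggregate n x F π β Y (x i)
          * (∫ l, F l (x i) * expWeight n x F π β Y l ∂π)
        + aggregate n x F π β Y (x i) ^ 2 * ∫ l, expWeight n x F π β Y l ∂π := by
    have heq : (fun l => (F l (x i) - aggregate n x F π β Y (x i)) ^ 2
          * expWeight n x F π β Y l)
        = fun l => (F l (x i) ^ 2 * expWeight n x F π β Y l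
            - 2 * aggregate n x F π β Y (x i) * (F l (x i) * expWeight n x F π β Y l))
            + aggregate n x F π β Y (x i) ^ 2 * expWeight n x F π β Y l := by
      funext l; ring
    have hInt1 : Integrable (fun l => F l (x i) ^ 2 * expWeight n x F π β Y l
        - 2 * aggregate n x F π β Y (x i) * (F l (x i) * expWeight n x F π β Y l)) π :=
      hθF2int.sub (hθFint.const_mul (2 * aggregate n x F π β Y (x i)))
    have hInt2 : Integrable (fun l => aggregate n x F π β Y (x i) ^ 2
        * expWeight n x F π β Y l) π := hθint.const_mul _
    rw [heq, integral_add hInt1 hInt2,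
      integral_sub hθF2int (hθFint.const_mul (2 * aggregate n x F π β Y (x i))),
      integral_const_mul, integral_const_mul]
  have hG2 : (2 / β) * ∫ l, (F l (x i) - aggregate n x F π β Y (x i)) ^ 2
        * expWeight n x F π β Y l ∂π
      = (2 / β) * ((∫ l, (F l (x i)) ^ 2 * expWeight n x F π β Y l ∂π)
          - (aggregate n x F π β Y (x i)) ^ 2) := by
    rw [hsplit, hθF, hθ1, agg_eq Y i, hIexp]
    field_simp
    ring
  refine ⟨hG1, hG1.trans hG2.symm, ?_⟩
  rw [hG1.trans hG2.symm]
  refine mul_nonneg (by positivity) (integral_nonneg fun l => ?_)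
  refine mul_nonneg (sq_nonneg _) ?_
  rw [expW_eq n x F β π hn]
  exact div_nonneg (gW_pos l).le (hDpos Y).le
end
end

section
/- Let n ≥ 1 be an integer and σ > 0, and define L_ζ(t) = 1 + (2n+1)σ² t² / (2n² − (n+1)² σ² t²). Then for all t with |t| ≤ n/((n+1)σ), one has log L_ζ(t) ≤ (2n+1)(σ t / n)². -/
/-- The moment generating function bound for the "dummy" noise associated with the
double exponential (Laplace) distribution: with
`L_ζ(t) = 1 + (2n+1)σ²t²/(2n² − (n+1)²σ²t²)`, one has
`log L_ζ(t) ≤ (2n+1)(σt/n)²` whenever `|t| ≤ n/((n+1)σ)`. -/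
theorem log_mgf_laplace_dummy_bound (n : ℕ) (hn : 1 ≤ n) (σ : ℝ) (hσ : 0 < σ)
    (L : ℝ → ℝ)
    (hL : ∀ t, L t = 1 + (2 * n + 1) * σ ^ 2 * t ^ 2 /
      (2 * (n : ℝ) ^ 2 - ((n : ℝ) + 1) ^ 2 * σ ^ 2 * t ^ 2))
    (t : ℝ) (ht : |t| ≤ (n : ℝ) / (((n : ℝ) + 1) * σ)) :
    Real.log (L t) ≤ (2 * n + 1) * (σ * t / n) ^ 2 := by
  have hn1 : (1:ℝ) ≤ (n:ℝ) := by exact_mod_cast hn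
  have hnpos : (0:ℝ) < (n:ℝ) := by linarith
  have hdenpos : (0:ℝ) < ((n:ℝ) + 1) * σ := by positivity
  have h1 : |t| * (((n:ℝ) + 1) * σ) ≤ (n : ℝ) := by
    rw [div_eq_mul_inv] at ht
    calc |t| * (((n:ℝ) + 1) * σ) ≤ ((n:ℝ) * (((n:ℝ)+1)*σ)⁻¹) * (((n:ℝ)+1)*σ) := by
          exact mul_le_mul_of_nonneg_right ht hdenpos.le
      _ = (n:ℝ) := by field_simp
  have hB : ((n:ℝ) + 1) ^ 2 * σ ^ 2 * t ^ 2 ≤ (n:ℝ) ^ 2 := by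
    calc ((n:ℝ) + 1) ^ 2 * σ ^ 2 * t ^ 2 = (|t| * (((n:ℝ) + 1) * σ)) ^ 2 := by
          rw [mul_pow, mul_pow, sq_abs]; ring
      _ ≤ (n:ℝ) ^ 2 := pow_le_pow_left₀ (by positivity) h1 2
  have hden : (0:ℝ) < 2 * (n:ℝ) ^ 2 - ((n:ℝ) + 1) ^ 2 * σ ^ 2 * t ^ 2 := by nlinarith
  set A : ℝ := (2 * n + 1) * σ ^ 2 * t ^ 2 with hA
  have hA0 : 0 ≤ A := by positivity
  set D : ℝ := 2 * (n:ℝ) ^ 2 - ((n:ℝ) + 1) ^ 2 * σ ^ 2 * t ^ 2 with hD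
  have hx0 : 0 ≤ A / D := div_nonneg hA0 hden.le
  have hlog : Real.log (1 + A / D) ≤ A / D := by
    have := Real.add_one_le_exp (A / D)
    calc Real.log (1 + A / D) ≤ Real.log (Real.exp (A / D)) := by
          apply Real.log_le_log (by linarith) (by linarith)
      _ = A / D := Real.log_exp _
  have hxle : A / D ≤ (2 * n + 1) * (σ * t / n) ^ 2 := by
    have hn2 : (0:ℝ) < (n:ℝ)^2 := by positivity
    have hle : (n:ℝ)^2 ≤ D := by rw [hD]; nlinarith
    calc A / D ≤ A / (n:ℝ)^2 := div_le_div_of_nonneg_left hA0 hn2 hle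
      _ = (2 * n + 1) * (σ * t / n) ^ 2 := by
          field_simp; ring
  rw [hL]
  calc Real.log (1 + A / D) ≤ A / D := hlog
    _ ≤ _ := hxle
end

section
/- Let ξ be a real random variable with E(e^{t|ξ|^κ}) ≤ B for some constants t > 0, κ > 0, B > 0. Let n ≥ e^{1/κ} and set α = (2(log n)/t)^{2/κ}. Then E( (ξ² − α)₊ ) ≤ B α / n². -/
open MeasureTheory

/-- If `E exp(t|ξ|^κ) ≤ B`, `n ≥ e^{1/κ}` and `α = (2 log n / t)^{2/κ}`, then
`E (ξ² − α)₊ ≤ B α / n²`. -/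
theorem truncated_second_moment_bound
    {Ω : Type*} [MeasurableSpace Ω] (P : Measure Ω) [IsProbabilityMeasure P]
    (ξ : Ω → ℝ) (hξm : Measurable ξ)
    (t κ B : ℝ) (ht : 0 < t) (hκ : 0 < κ) (hB : 0 < B)
    (hint : Integrable (fun ω => Real.exp (t * |ξ ω| ^ κ)) P)
    (hmom : ∫ ω, Real.exp (t * |ξ ω| ^ κ) ∂P ≤ B)
    (n : ℕ) (hn : Real.exp (1 / κ) ≤ (n : ℝ))
    (α : ℝ) (hα : α = (2 * Real.log n / t) ^ ((2 : ℝ) / κ)) :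
    ∫ ω, max (ξ ω ^ 2 - α) 0 ∂P ≤ B * α / (n : ℝ) ^ 2 := by
  have hn0 : (0 : ℝ) < n := lt_of_lt_of_le (Real.exp_pos _) hn
  have hL : 1 / κ ≤ Real.log n := (Real.le_log_iff_exp_le hn0).2 hn
  have hL0 : 0 < Real.log n := lt_of_lt_of_le (by positivity) hL
  set β := (2 * Real.log n / t) ^ ((1 : ℝ) / κ) with hβ
  have hx0 : 0 < 2 * Real.log n / t := by positivity
  have hβ0 : 0 < β := Real.rpow_pos_of_pos hx0 _
  have hβ2 : β ^ 2 = α := by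
    rw [hα, hβ, ← Real.rpow_natCast _ 2, ← Real.rpow_mul hx0.le]
    norm_num
    rw [inv_mul_eq_div]
  have hβκ : β ^ κ = 2 * Real.log n / t := by
    rw [hβ, ← Real.rpow_mul hx0.le, one_div, inv_mul_cancel₀ hκ.ne', Real.rpow_one]
  have hα0 : 0 < α := hβ2 ▸ (by positivity)
  have hen : Real.exp (t * β ^ κ) = (n : ℝ) ^ 2 := by
    rw [hβκ, mul_div_cancel₀ _ ht.ne', two_mul, Real.exp_add, Real.exp_log hn0, sq]
  have key : ∀ ω, max (ξ ω ^ 2 - α) 0 ≤ α / (n : ℝ) ^ 2 * Real.exp (t * |ξ ω| ^ κ) := by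
    intro ω
    set y := |ξ ω| with hy
    have hy0 : 0 ≤ y := abs_nonneg _
    have hyy : ξ ω ^ 2 = y ^ 2 := (sq_abs _).symm
    rcases le_or_gt (y ^ 2) α with h | h
    · rw [max_eq_right (by rw [hyy]; linarith)]
      positivity
    · have hβy : β < y := by nlinarith
      set u := (y / β) ^ κ with hu
      have hu1 : (1 : ℝ) ≤ u := Real.one_le_rpow ((one_le_div hβ0).2 hβy.le) hκ.le
      have hyk : y ^ κ = u * β ^ κ := by
        rw [hu, Real.div_rpow hy0 hβ0.le,
          div_mul_cancel₀ _ (Real.rpow_pos_of_pos hβ0 κ).ne']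
      have hlog : Real.log u ≤ u - 1 := Real.log_le_sub_one_of_pos (by linarith)
      -- y^2 / β^2 = u ^ (2/κ) ≤ exp (t*y^κ - t*β^κ)
      have h1 : y ^ 2 / β ^ 2 = Real.exp (Real.log u * (2 / κ)) := by
        have hup : (0:ℝ) < u := by linarith
        rw [← Real.rpow_def_of_pos hup, hu,
          ← Real.rpow_mul (by positivity : (0:ℝ) ≤ y / β)]
        have hc : κ * (2 / κ) = (2 : ℝ) := by field_simp
        rw [hc, show (2:ℝ) = ((2:ℕ):ℝ) by norm_num, Real.rpow_natCast, div_pow]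
      have h2 : Real.log u * (2 / κ) ≤ t * y ^ κ - t * β ^ κ := by
        have hexpand : t * y ^ κ - t * β ^ κ = (2 * Real.log n) * (u - 1) := by
          rw [hyk, hβκ]; field_simp
        rw [hexpand]
        have h2κ : 2 / κ ≤ 2 * Real.log n := by
          rw [div_le_iff₀ hκ] at *
          nlinarith
        nlinarith [mul_nonneg (sub_nonneg.2 hlog) (by positivity : (0:ℝ) ≤ 2 / κ),
          mul_nonneg (sub_nonneg.2 h2κ) (by linarith : (0:ℝ) ≤ u - 1)]
      have h3 : y ^ 2 ≤ α / (n : ℝ) ^ 2 * Real.exp (t * y ^ κ) := by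
        have := (div_le_iff₀ (by positivity : (0:ℝ) < β ^ 2)).1
          (h1 ▸ (Real.exp_le_exp.2 h2 : Real.exp (Real.log u * (2 / κ)) ≤ _))
        calc y ^ 2 ≤ Real.exp (t * y ^ κ - t * β ^ κ) * β ^ 2 := this
          _ = α / (n : ℝ) ^ 2 * Real.exp (t * y ^ κ) := by
              rw [← hen, ← hβ2, Real.exp_sub]; ring
      rw [max_eq_left (by rw [hyy]; linarith), hyy]
      linarith
  calc ∫ ω, max (ξ ω ^ 2 - α) 0 ∂P
      ≤ ∫ ω, α / (n : ℝ) ^ 2 * Real.exp (t * |ξ ω| ^ κ) ∂P := by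
        refine integral_mono_of_nonneg ?_ (hint.const_mul _) ?_
        · filter_upwards with ω using le_max_right _ _
        · filter_upwards with ω using key ω
    _ = α / (n : ℝ) ^ 2 * ∫ ω, Real.exp (t * |ξ ω| ^ κ) ∂P := integral_const_mul _ _
    _ ≤ α / (n : ℝ) ^ 2 * B := by
        have : (0:ℝ) ≤ α / (n : ℝ) ^ 2 := by positivity
        exact mul_le_mul_of_nonneg_left hmom this
    _ = B * α / (n : ℝ) ^ 2 := by ring
end
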